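/- Assume A·Z − M² > |B·Z − M·N| (inequality (In2)) and −A ≥ |B| (inequality (In3)). Then for every τ ≥ 0 and every λ ∈ ℂ with Re λ ≥ 0, p(λ)² ≠ e^{−λτ}·g(λ)². In other words, for every value of the delay τ ≥ 0 the quasipolynomial Q_τ(λ) = p(λ)² − e^{−λτ}·g(λ)² of the Cournot duopoly model with equal marginal costs has no roots in the closed right half-plane, so the equilibrium is asymptotically stable independently of the delay. -/

import Mathlib

lemma key_ineq (x y b c1 c2 d e : ℝ) (hx : 0 ≤ x) (hb1 : b ≤ c1) (hb2 : -c1 ≤ b)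
    (hc2 : 0 < c2) (hd : d ≤ c1 * c2) (hde1 : -d < e) (hde2 : e < d) :
    (b * x + e) ^ 2 + b ^ 2 * y ^ 2 <
      (x ^ 2 - y ^ 2 + (c1 + c2) * x + d) ^ 2 + (2 * x * y + (c1 + c2) * y) ^ 2 := by
  have hc1 : 0 ≤ c1 := by linarith
  have hb2sq : b ^ 2 ≤ c1 ^ 2 := by nlinarith
  have hf1 : 0 < x ^ 2 + (c1 + c2 + b) * x + (d + e) := by
    nlinarith [mul_nonneg hx (by linarith : (0:ℝ) ≤ c1 + c2 + b), sq_nonneg x]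
  have hf2 : 0 < x ^ 2 + (c1 + c2 - b) * x + (d - e) := by
    nlinarith [mul_nonneg hx (by linarith : (0:ℝ) ≤ c1 + c2 - b), sq_nonneg x]
  have halpha : 0 < 2 * x ^ 2 + 2 * (c1 + c2) * x + (c1 + c2) ^ 2 - b ^ 2 - 2 * d := by
    nlinarith [sq_nonneg x, mul_nonneg hx (by linarith : (0:ℝ) ≤ c1 + c2)]
  nlinarith [mul_pos hf1 hf2, mul_nonneg (sq_nonneg y) halpha.le, sq_nonneg (y ^ 2)]

/-- `p(λ) = λ² - (k1 A + k3 Z) λ + k1 k3 (A Z - M²)`, over `ℂ`. -/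
noncomputable def pq (A Z M k1 k3 : ℝ) (l : ℂ) : ℂ :=
  l ^ 2 - ((k1 * A + k3 * Z : ℝ) : ℂ) * l + ((k1 * k3 * (A * Z - M ^ 2) : ℝ) : ℂ)

/-- `g(λ) = k1 B λ - k1 k3 B Z + k1 k3 M N`, over `ℂ`. -/
noncomputable def gq (Z M B N k1 k3 : ℝ) (l : ℂ) : ℂ :=
  ((k1 * B : ℝ) : ℂ) * l - ((k1 * k3 * B * Z : ℝ) : ℂ) + ((k1 * k3 * M * N : ℝ) : ℂ)

set_option maxHeartbeats 1000000 in
/-- under (In2) and (In3), for every delay `τ ≥ 0` the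
quasipolynomial `Q_τ(λ) = p(λ)² - e^{-λτ} g(λ)²` has no roots in the closed
right half-plane: asymptotic stability independent of delay. -/
theorem stmt_17 (A Z M B N k1 k3 : ℝ) (hk1 : 0 < k1) (hk3 : 0 < k3)
    (hIn2 : A * Z - M ^ 2 > |B * Z - M * N|) (hIn3 : -A ≥ |B|) :
    ∀ τ : ℝ, 0 ≤ τ → ∀ l : ℂ, 0 ≤ l.re →
      (pq A Z M k1 k3 l) ^ 2 ≠ Complex.exp (-(l * τ)) * (gq Z M B N k1 k3 l) ^ 2 := by
  intro τ hτ l hx heq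
  have hk13 : 0 < k1 * k3 := mul_pos hk1 hk3
  have hBa := abs_le.mp hIn3
  have hMa := abs_lt.mp hIn2
  have hM2 : 0 < A * Z - M ^ 2 := lt_of_le_of_lt (abs_nonneg _) hIn2
  have hAZ : 0 < A * Z := by nlinarith [sq_nonneg M]
  have hAle : A ≤ 0 := by linarith [abs_nonneg B]
  have hA : A < 0 := by
    rcases lt_or_eq_of_le hAle with h | h
    · exact h
    · rw [h] at hAZ; simp at hAZ
  have hZ : Z < 0 := by
    by_contra h
    push_neg at h
    nlinarith [mul_nonneg h (neg_nonneg.mpr hAle)]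
  -- key real inequality
  have key := key_ineq l.re l.im (k1 * B) (-(k1 * A)) (-(k3 * Z))
      (k1 * k3 * (A * Z - M ^ 2)) (k1 * k3 * (M * N - B * Z)) hx
      (by nlinarith [hBa.2]) (by nlinarith [hBa.1])
      (by nlinarith)
      (by nlinarith [mul_nonneg hk13.le (sq_nonneg M)])
      (by nlinarith [mul_pos hk13 (by linarith [hMa.1] : (0:ℝ) < (A * Z - M ^ 2) + (B * Z - M * N))])
      (by nlinarith [mul_pos hk13 (by linarith [hMa.2] : (0:ℝ) < (A * Z - M ^ 2) - (B * Z - M * N))])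
  -- normSq computations
  have hp : Complex.normSq (pq A Z M k1 k3 l) =
      (l.re ^ 2 - l.im ^ 2 + (-(k1 * A) + -(k3 * Z)) * l.re + k1 * k3 * (A * Z - M ^ 2)) ^ 2 +
        (2 * l.re * l.im + (-(k1 * A) + -(k3 * Z)) * l.im) ^ 2 := by
    simp [pq, Complex.normSq_apply, pow_two, Complex.mul_re, Complex.mul_im]
    ring
  have hg : Complex.normSq (gq Z M B N k1 k3 l) =
      (k1 * B * l.re + k1 * k3 * (M * N - B * Z)) ^ 2 + (k1 * B) ^ 2 * l.im ^ 2 := by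
    simp [gq, Complex.normSq_apply, pow_two, Complex.mul_re, Complex.mul_im]
    ring
  -- take moduli in heq
  have habs := congrArg (fun z : ℂ => ‖z‖) heq
  rw [norm_mul, norm_pow, norm_pow, Complex.norm_exp] at habs
  have hre : (-(l * (τ : ℂ))).re = -(l.re * τ) := by simp
  rw [hre] at habs
  have hexp : Real.exp (-(l.re * τ)) ≤ 1 := by
    calc Real.exp (-(l.re * τ)) ≤ Real.exp 0 :=
          Real.exp_le_exp.mpr (by nlinarith [mul_nonneg hx hτ])
    _ = 1 := Real.exp_zero
  have h1 : ‖pq A Z M k1 k3 l‖ ^ 2 ≤ ‖gq Z M B N k1 k3 l‖ ^ 2 := by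
    rw [habs]
    exact mul_le_of_le_one_left (sq_nonneg _) hexp
  rw [Complex.sq_norm, Complex.sq_norm, hp, hg] at h1
  linarith
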